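/- The generating function F_p(x) for friendly p-watermelons (p walkers from the origin to a common endpoint, non-crossing, such that all p walkers never simultaneously occupy the same vertex except at the two endpoints, and never do all p walkers share an edge) satisfies F_p(x) = 2(1-x) - 1/V_p(x), where V_p(x) is the generating function for vicious p-watermelons. -/

import Mathlib

/-- A directed walk of length `n`, encoded by its ordinates, frozen after time `n`. -/
def IsWalkTo (n : ℕ) (y : ℕ → ℤ) : Prop :=
  (∀ t < n, y (t + 1) = y t + 1 ∨ y (t + 1) = y t - 1) ∧ (∀ t, n ≤ t → y t = y n)

/-- A vicious `p`-watermelon of length `n`: walks start at heights `0,2,…,2(p-1)`,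
end at heights `c, c+2, …, c+2(p-1)` for some `c`, with strict ordering at every time. -/
def Vicious (p n : ℕ) (y : Fin p → ℕ → ℤ) : Prop :=
  (∀ k, IsWalkTo n (y k)) ∧
  (∀ k : Fin p, y k 0 = 2 * ((k : ℕ) : ℤ)) ∧
  (∃ c : ℤ, ∀ k : Fin p, y k n = c + 2 * ((k : ℕ) : ℤ)) ∧
  (∀ t ≤ n, ∀ j k : Fin p, j < k → y j t < y k t)

/-- A super friendly `p`-watermelon of length `n`: all walks start at the origin,
all end at the same point, with weak ordering at every time. -/
def SuperFriendly (p n : ℕ) (y : Fin p → ℕ → ℤ) : Prop :=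
  (∀ k, IsWalkTo n (y k)) ∧
  (∀ k, y k 0 = 0) ∧
  (∀ j k : Fin p, y j n = y k n) ∧
  (∀ t ≤ n, ∀ j k : Fin p, j ≤ k → y j t ≤ y k t)

/-- All `p` walkers coincide at time `t`. -/
def AllCoincide (p : ℕ) (y : Fin p → ℕ → ℤ) (t : ℕ) : Prop :=
  ∀ j k : Fin p, y j t = y k t

/-- A friendly `p`-watermelon: walkers from the origin to a common endpoint,
non-crossing, never all on the same vertex except at the endpoints, and never
all sharing an edge (i.e. never all coinciding at two consecutive times `t, t+1`
with `t < n`). -/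
def FriendlyWM (p n : ℕ) (y : Fin p → ℕ → ℤ) : Prop :=
  SuperFriendly p n y ∧
  (∀ t, 0 < t → t < n → ¬ AllCoincide p y t) ∧
  (∀ t < n, ¬ (AllCoincide p y t ∧ AllCoincide p y (t + 1)))

namespace WMAux

open Finset

variable {p : ℕ}

/-- An irreducible piece: super friendly with no interior coincidence. -/
def Piece (p n : ℕ) (y : Fin p → ℕ → ℤ) : Prop :=
  SuperFriendly p n y ∧ (∀ t, 0 < t → t < n → ¬ AllCoincide p y t)

lemma walk_parity {n : ℕ} {y : ℕ → ℤ} (h : IsWalkTo n y) :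
    ∀ t ≤ n, Even (y t - y 0 - t) := by
  intro t
  induction t with
  | zero => intro _; simp
  | succ t ih =>
    intro ht
    obtain ⟨u, hu⟩ := ih (by omega)
    rcases h.1 t (by omega) with h1 | h1
    · exact ⟨u, by push_cast; omega⟩
    · exact ⟨u - 1, by push_cast; omega⟩

lemma walk_ext {n : ℕ} {y z : ℕ → ℤ} (hy : IsWalkTo n y) (hz : IsWalkTo n z)
    (h0 : y 0 = z 0) (hs : ∀ t < n, (y (t + 1) = y t + 1 ↔ z (t + 1) = z t + 1)) :
    y = z := by
  have key : ∀ t, t ≤ n → y t = z t := by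
    intro t
    induction t with
    | zero => exact fun _ => h0
    | succ t ih =>
      intro ht
      have ht' : t < n := by omega
      have e := ih (by omega)
      have hiff := hs t ht'
      rcases hy.1 t ht' with h1 | h1 <;> rcases hz.1 t ht' with h2 | h2 <;> omega
  funext t
  by_cases h : t ≤ n
  · exact key t h
  · rw [hy.2 t (by omega), hz.2 t (by omega)]; exact key n le_rfl

lemma finite_walks (c : Fin p → ℤ) (n : ℕ) :
    Finite {y : Fin p → ℕ → ℤ // (∀ k, IsWalkTo n (y k)) ∧ ∀ k, y k 0 = c k} := by
  apply Finite.of_injective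
    (fun x => fun (k : Fin p) (t : Fin n) => decide (x.1 k ((t : ℕ) + 1) = x.1 k (t : ℕ) + 1))
  intro a b hab
  apply Subtype.ext
  funext k
  refine walk_ext (a.2.1 k) (b.2.1 k) (by rw [a.2.2 k, b.2.2 k]) ?_
  intro t ht
  have := congrFun (congrFun hab k) ⟨t, ht⟩
  simpa [decide_eq_decide] using this

instance finSF (n : ℕ) : Finite {y : Fin p → ℕ → ℤ // SuperFriendly p n y} := by
  have := finite_walks (fun _ : Fin p => (0 : ℤ)) n
  exact Finite.of_injective
    (fun x => (⟨x.1, x.2.1, x.2.2.1⟩ : {y : Fin p → ℕ → ℤ //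
      (∀ k, IsWalkTo n (y k)) ∧ ∀ k, y k 0 = 0}))
    (by
      intro a b h
      have h2 := congrArg Subtype.val h
      exact Subtype.ext h2)

instance finVic (n : ℕ) : Finite {y : Fin p → ℕ → ℤ // Vicious p n y} := by
  have := finite_walks (fun k : Fin p => (2 * ((k : ℕ) : ℤ))) n
  exact Finite.of_injective
    (fun x => (⟨x.1, x.2.1, x.2.2.1⟩ : {y : Fin p → ℕ → ℤ //
      (∀ k, IsWalkTo n (y k)) ∧ ∀ k, y k 0 = 2 * ((k : ℕ) : ℤ)}))
    (by
      intro a b h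
      have h2 := congrArg Subtype.val h
      exact Subtype.ext h2)

instance finFWM (n : ℕ) : Finite {y : Fin p → ℕ → ℤ // FriendlyWM p n y} :=
  Finite.of_injective
    (fun x => (⟨x.1, x.2.1⟩ : {y : Fin p → ℕ → ℤ // SuperFriendly p n y}))
    (by
      intro a b h
      have h2 := congrArg Subtype.val h
      exact Subtype.ext h2)

instance finPiece (n : ℕ) : Finite {y : Fin p → ℕ → ℤ // Piece p n y} :=
  Finite.of_injective
    (fun x => (⟨x.1, x.2.1⟩ : {y : Fin p → ℕ → ℤ // SuperFriendly p n y}))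
    (by
      intro a b h
      have h2 := congrArg Subtype.val h
      exact Subtype.ext h2)

lemma even_gap {a b : ℤ} (h : Even (b - a)) (hlt : a < b) : a + 2 ≤ b := by
  obtain ⟨u, hu⟩ := h; omega

lemma isWalkTo_addconst {n : ℕ} {y : ℕ → ℤ} (c : ℤ) (h : IsWalkTo n y) :
    IsWalkTo n (fun t => y t + c) := by
  constructor
  · intro t ht
    rcases h.1 t ht with h1 | h1
    · left; show y (t + 1) + c = y t + c + 1; omega
    · right; show y (t + 1) + c = y t + c - 1; omega
  · intro t ht
    show y t + c = y n + c
    rw [h.2 t ht]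

lemma vicious_gap {n : ℕ} {y : Fin p → ℕ → ℤ} (h : Vicious p n y) {t : ℕ} (ht : t ≤ n) :
    ∀ j k : Fin p, j ≤ k → y j t + 2 * (((k : ℕ) : ℤ) - ((j : ℕ) : ℤ)) ≤ y k t := by
  have hpar : ∀ k : Fin p, Even (y k t - 2 * ((k : ℕ) : ℤ) - t) := by
    intro k
    have := walk_parity (h.1 k) t ht
    rwa [h.2.1 k] at this
  have key : ∀ m : ℕ, ∀ j k : Fin p, (k : ℕ) = (j : ℕ) + m →
      y j t + 2 * (m : ℤ) ≤ y k t := by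
    intro m
    induction m with
    | zero =>
      intro j k hjk
      have : j = k := Fin.ext (by omega)
      subst this; simp
    | succ m ih =>
      intro j k hjk
      have hk' : (j : ℕ) + m < p := by have := k.isLt; omega
      set k' : Fin p := ⟨(j : ℕ) + m, hk'⟩ with hk'def
      have h1 := ih j k' rfl
      have hlt : y k' t < y k t := h.2.2.2 t ht k' k (by
        rw [Fin.lt_def]; simp [hk'def]; omega)
      have heven : Even (y k t - y k' t) := by
        obtain ⟨u, hu⟩ := hpar k
        obtain ⟨w, hw⟩ := hpar k'
        exact ⟨u - w + ((k : ℕ) : ℤ) - ((k' : ℕ) : ℤ), by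
          have : ((k' : ℕ) : ℤ) = ((j : ℕ) : ℤ) + m := by simp [hk'def]
          push_cast at *
          omega⟩
      have h2 := even_gap heven hlt
      push_cast at *
      omega
  intro j k hjk
  have hle : (j : ℕ) ≤ (k : ℕ) := hjk
  have := key ((k : ℕ) - (j : ℕ)) j k (by omega)
  push_cast [Nat.cast_sub hle] at this ⊢
  omega

def viciousEquiv (hp : 1 ≤ p) (n : ℕ) :
    {y : Fin p → ℕ → ℤ // Vicious p n y} ≃ {y : Fin p → ℕ → ℤ // SuperFriendly p n y} where
  toFun x := ⟨fun k t => x.1 k t - 2 * ((k : ℕ) : ℤ), by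
    obtain ⟨y, hy⟩ := x
    refine ⟨fun k => ?_, fun k => ?_, fun j k => ?_, fun t ht j k hjk => ?_⟩ <;> dsimp only
    · simpa [sub_eq_add_neg] using isWalkTo_addconst (-(2 * ((k : ℕ) : ℤ))) (hy.1 k)
    · rw [hy.2.1 k]; ring
    · obtain ⟨c, hc⟩ := hy.2.2.1
      rw [hc j, hc k]; ring
    · have := vicious_gap hy ht j k hjk
      have hle : ((j : ℕ) : ℤ) ≤ ((k : ℕ) : ℤ) := by exact_mod_cast (show (j:ℕ) ≤ (k:ℕ) from hjk)
      omega⟩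
  invFun x := ⟨fun k t => x.1 k t + 2 * ((k : ℕ) : ℤ), by
    obtain ⟨y, hy⟩ := x
    refine ⟨fun k => ?_, fun k => ?_, ⟨y ⟨0, hp⟩ n, fun k => ?_⟩, fun t ht j k hjk => ?_⟩ <;>
      dsimp only
    · exact isWalkTo_addconst (2 * ((k : ℕ) : ℤ)) (hy.1 k)
    · rw [hy.2.1 k]; ring
    · rw [hy.2.2.1 k ⟨0, hp⟩]
    · have h1 := hy.2.2.2 t ht j k (le_of_lt hjk)
      have h2 : ((j : ℕ) : ℤ) < ((k : ℕ) : ℤ) := by exact_mod_cast (show (j:ℕ) < (k:ℕ) from hjk)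
      omega⟩
  left_inv x := by apply Subtype.ext; funext k t; simp
  right_inv x := by apply Subtype.ext; funext k t; simp

lemma allCoincide_congr {y z : Fin p → ℕ → ℤ} {t : ℕ} (h : ∀ k, y k t = z k t) :
    AllCoincide p y t ↔ AllCoincide p z t := by
  constructor <;> intro hc j k
  · rw [← h j, ← h k]; exact hc j k
  · rw [h j, h k]; exact hc j k

/-- First return time: the least positive time at which all walkers coincide. -/
noncomputable def fret (y : Fin p → ℕ → ℤ) : ℕ :=
  sInf {t | 0 < t ∧ AllCoincide p y t}

lemma fret_eq {y : Fin p → ℕ → ℤ} {r : ℕ} (h1 : 0 < r) (hco : AllCoincide p y r)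
    (hmin : ∀ t, 0 < t → t < r → ¬ AllCoincide p y t) : fret y = r := by
  apply le_antisymm (Nat.sInf_le (show r ∈ {t | 0 < t ∧ AllCoincide p y t} from ⟨h1, hco⟩))
  by_contra hlt
  push_neg at hlt
  have hmem := Nat.sInf_mem (s := {t | 0 < t ∧ AllCoincide p y t}) ⟨r, h1, hco⟩
  exact hmin _ hmem.1 hlt hmem.2

lemma fret_spec {n : ℕ} {y : Fin p → ℕ → ℤ} (h : SuperFriendly p n y) (hn : 1 ≤ n) :
    0 < fret y ∧ fret y ≤ n ∧ AllCoincide p y (fret y) ∧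
      ∀ t, 0 < t → t < fret y → ¬ AllCoincide p y t := by
  have hmemn : n ∈ {t | 0 < t ∧ AllCoincide p y t} := ⟨hn, fun j k => h.2.2.1 j k⟩
  have hmem := Nat.sInf_mem (s := {t | 0 < t ∧ AllCoincide p y t}) ⟨n, hmemn⟩
  exact ⟨hmem.1, Nat.sInf_le hmemn, hmem.2,
    fun t h0 hlt hc => Nat.notMem_of_lt_sInf hlt ⟨h0, hc⟩⟩

/-- Glue a piece of length `r` with a continuation. -/
def glueAt (r : ℕ) (z w : Fin p → ℕ → ℤ) : Fin p → ℕ → ℤ :=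
  fun k t => if t ≤ r then z k t else z k r + w k (t - r)

lemma glueAt_of_le {r : ℕ} {z w : Fin p → ℕ → ℤ} {k : Fin p} {t : ℕ} (h : t ≤ r) :
    glueAt r z w k t = z k t := if_pos h

lemma glueAt_of_ge {r : ℕ} {z w : Fin p → ℕ → ℤ} {k : Fin p} {t : ℕ}
    (hw : w k 0 = 0) (h : r ≤ t) : glueAt r z w k t = z k r + w k (t - r) := by
  rcases eq_or_lt_of_le h with he | hlt
  · subst he; simp [glueAt, hw]
  · exact if_neg (by omega)

lemma piece_freeze {n r : ℕ} {y : Fin p → ℕ → ℤ} (h : SuperFriendly p n y)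
    (h1 : 1 ≤ r) (hrn : r ≤ n) (hco : AllCoincide p y r)
    (hmin : ∀ t, 0 < t → t < r → ¬ AllCoincide p y t) :
    Piece p r (fun k t => y k (min t r)) := by
  refine ⟨⟨fun k => ⟨fun t ht => ?_, fun t ht => ?_⟩, fun k => ?_, fun j k => ?_,
    fun t ht j k hjk => ?_⟩, fun t h0 htr hc => ?_⟩ <;> (try dsimp only)
  · rw [show min (t + 1) r = t + 1 by omega, show min t r = t by omega]
    exact (h.1 k).1 t (by omega)
  · rw [min_self, min_eq_right ht]
  · rw [Nat.min_eq_left (Nat.zero_le r)]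
    exact h.2.1 k
  · rw [min_self]
    exact hco j k
  · exact h.2.2.2 (min t r) (by omega) j k hjk
  · refine hmin t h0 htr ?_
    intro j k
    have := hc j k
    dsimp only at this
    rwa [min_eq_left (le_of_lt htr)] at this

lemma sf_shift {n r : ℕ} {y : Fin p → ℕ → ℤ} (h : SuperFriendly p n y)
    (hrn : r ≤ n) (hco : AllCoincide p y r) :
    SuperFriendly p (n - r) (fun k t => y k (r + t) - y k r) := by
  refine ⟨fun k => ⟨fun t ht => ?_, fun t ht => ?_⟩, fun k => ?_, fun j k => ?_,
    fun t ht j k hjk => ?_⟩ <;> dsimp only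
  · rw [show r + (t + 1) = (r + t) + 1 by omega]
    rcases (h.1 k).1 (r + t) (by omega) with h1 | h1
    · left; omega
    · right; omega
  · rw [(h.1 k).2 (r + t) (by omega), show r + (n - r) = n by omega,
      (h.1 k).2 n le_rfl]
  · simp
  · rw [show r + (n - r) = n by omega]
    have h1 := h.2.2.1 j k
    have h2 := hco j k
    omega
  · have h1 := h.2.2.2 (r + t) (by omega) j k hjk
    have h2 := hco j k
    omega

lemma sf_glue {r m : ℕ} {z w : Fin p → ℕ → ℤ} (hz : SuperFriendly p r z)
    (hw : SuperFriendly p m w) : SuperFriendly p (r + m) (glueAt r z w) := by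
  have hw0 : ∀ k, w k 0 = 0 := hw.2.1
  refine ⟨fun k => ⟨fun t ht => ?_, fun t ht => ?_⟩, fun k => ?_, fun j k => ?_,
    fun t ht j k hjk => ?_⟩
  · by_cases htr : t + 1 ≤ r
    · rw [glueAt_of_le htr, glueAt_of_le (by omega)]
      exact (hz.1 k).1 t (by omega)
    · rw [glueAt_of_ge (hw0 k) (by omega)]
      by_cases htr' : t ≤ r
      · have hteq : t = r := by omega
        subst hteq
        rw [glueAt_of_le le_rfl, show t + 1 - t = 0 + 1 by omega]
        rcases (hw.1 k).1 0 (by omega) with h1 | h1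
        · left; rw [h1, hw0 k]; ring
        · right; rw [h1, hw0 k]; ring
      · rw [glueAt_of_ge (hw0 k) (by omega), show t + 1 - r = (t - r) + 1 by omega]
        rcases (hw.1 k).1 (t - r) (by omega) with h1 | h1
        · left; omega
        · right; omega
  · rw [glueAt_of_ge (hw0 k) (by omega), glueAt_of_ge (hw0 k) (by omega),
      Nat.add_sub_cancel_left, (hw.1 k).2 (t - r) (by omega)]
  · rw [glueAt_of_le (Nat.zero_le r)]
    exact hz.2.1 k
  · rw [glueAt_of_ge (hw0 j) (by omega), glueAt_of_ge (hw0 k) (by omega),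
      Nat.add_sub_cancel_left]
    have h1 := hz.2.2.1 j k
    have h2 := hw.2.2.1 j k
    omega
  · by_cases htr : t ≤ r
    · rw [glueAt_of_le htr, glueAt_of_le htr]
      exact hz.2.2.2 t htr j k hjk
    · rw [glueAt_of_ge (hw0 j) (by omega), glueAt_of_ge (hw0 k) (by omega)]
      have h1 := hz.2.2.2 r le_rfl j k hjk
      have h2 := hw.2.2.2 (t - r) (by omega) j k hjk
      omega

lemma fret_glue {r m : ℕ} {z w : Fin p → ℕ → ℤ} (hz : Piece p r z)
    (hw : SuperFriendly p m w) (h1 : 1 ≤ r) : fret (glueAt r z w) = r := by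
  refine fret_eq h1 ?_ ?_
  · intro j k
    rw [glueAt_of_le le_rfl, glueAt_of_le le_rfl]
    exact hz.1.2.2.1 j k
  · intro t h0 htr hc
    refine hz.2 t h0 htr ?_
    intro j k
    have := hc j k
    rwa [glueAt_of_le (by omega), glueAt_of_le (by omega)] at this

/-- The fiber of super friendly melons with first return `r = k+1` is a product. -/
noncomputable def fiberEquiv (n : ℕ) (hn : 1 ≤ n) (k : Fin n) :
    {x : {y : Fin p → ℕ → ℤ // SuperFriendly p n y} // fret x.1 = (k : ℕ) + 1} ≃
      {z : Fin p → ℕ → ℤ // Piece p ((k : ℕ) + 1) z} ×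
        {w : Fin p → ℕ → ℤ // SuperFriendly p (n - ((k : ℕ) + 1)) w} where
  toFun x :=
    ⟨⟨fun k' t => x.1.1 k' (min t ((k : ℕ) + 1)), by
        have hs := fret_spec x.1.2 hn
        rw [x.2] at hs
        exact piece_freeze x.1.2 (by omega) hs.2.1 hs.2.2.1 hs.2.2.2⟩,
     ⟨fun k' t => x.1.1 k' (((k : ℕ) + 1) + t) - x.1.1 k' ((k : ℕ) + 1), by
        have hs := fret_spec x.1.2 hn
        rw [x.2] at hs
        exact sf_shift x.1.2 hs.2.1 hs.2.2.1⟩⟩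
  invFun zw :=
    ⟨⟨glueAt ((k : ℕ) + 1) zw.1.1 zw.2.1, by
        have := sf_glue zw.1.2.1 zw.2.2
        have e : ((k : ℕ) + 1) + (n - ((k : ℕ) + 1)) = n := by have := k.isLt; omega
        rwa [e] at this⟩,
      fret_glue zw.1.2 zw.2.2 (by omega)⟩
  left_inv x := by
    apply Subtype.ext
    apply Subtype.ext
    funext k' t
    have hs := fret_spec x.1.2 hn
    rw [x.2] at hs
    dsimp only [glueAt]
    split_ifs with htr
    · rw [min_eq_left htr]
    · rw [min_self, show ((k : ℕ) + 1) + (t - ((k : ℕ) + 1)) = t by omega]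
      ring
  right_inv zw := by
    obtain ⟨⟨z, hz⟩, ⟨w, hw⟩⟩ := zw
    have hw0 : ∀ k', w k' 0 = 0 := hw.2.1
    refine Prod.ext (Subtype.ext ?_) (Subtype.ext ?_)
    · funext k' t
      dsimp only
      by_cases htr : t ≤ (k : ℕ) + 1
      · rw [min_eq_left htr, glueAt_of_le htr]
      · rw [min_eq_right (by omega), glueAt_of_le le_rfl,
          (hz.1.1 k').2 t (by omega)]
    · funext k' t
      dsimp only
      rw [glueAt_of_ge (hw0 k') (by omega), glueAt_of_le le_rfl,
        Nat.add_sub_cancel_left]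
      ring

lemma natcard_sigma {ι : Type} [Fintype ι] (F : ι → Type) [∀ i, Finite (F i)] :
    Nat.card (Σ i, F i) = ∑ i, Nat.card (F i) := by
  letI : ∀ i, Fintype (F i) := fun i => Fintype.ofFinite _
  simp [Nat.card_eq_fintype_card, Fintype.card_sigma]

lemma natcard_fiber {α : Type} {ι : Type} [Fintype ι] [Finite α] (f : α → ι) :
    Nat.card α = ∑ i, Nat.card {a : α // f a = i} := by
  rw [← natcard_sigma (fun i => {a : α // f a = i})]
  exact (Nat.card_congr (Equiv.sigmaFiberEquiv f)).symm

lemma s_card_rec (n : ℕ) (hn : 1 ≤ n) :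
    Nat.card {y : Fin p → ℕ → ℤ // SuperFriendly p n y} =
      ∑ k : Fin n, Nat.card {z : Fin p → ℕ → ℤ // Piece p ((k : ℕ) + 1) z} *
        Nat.card {w : Fin p → ℕ → ℤ // SuperFriendly p (n - ((k : ℕ) + 1)) w} := by
  rw [natcard_fiber (fun x : {y : Fin p → ℕ → ℤ // SuperFriendly p n y} =>
    (⟨fret x.1 - 1, by have := fret_spec x.2 hn; omega⟩ : Fin n))]
  refine Finset.sum_congr rfl fun k _ => ?_
  rw [← Nat.card_prod]
  refine Nat.card_congr (Equiv.trans ?_ (fiberEquiv n hn k))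
  refine Equiv.subtypeEquivRight fun x => ?_
  have := fret_spec x.2 hn
  constructor
  · intro h
    have := congrArg Fin.val h
    simp only [Fin.val_mk] at this
    omega
  · intro h
    apply Fin.ext
    simp only [Fin.val_mk]
    omega

lemma card_sf_zero : Nat.card {y : Fin p → ℕ → ℤ // SuperFriendly p 0 y} = 1 := by
  rw [Nat.card_eq_one_iff_unique]
  constructor
  · constructor
    intro a b
    apply Subtype.ext
    funext k t
    rw [(a.2.1 k).2 t (Nat.zero_le t), (b.2.1 k).2 t (Nat.zero_le t), a.2.2.1 k, b.2.2.1 k]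
  · exact ⟨⟨fun _ _ => 0, fun k => ⟨fun t ht => absurd ht (by omega), fun t _ => rfl⟩,
      fun k => rfl, fun j k => rfl, fun t _ j k _ => le_rfl⟩⟩

lemma card_friendly_zero : Nat.card {y : Fin p → ℕ → ℤ // FriendlyWM p 0 y} = 1 := by
  rw [Nat.card_eq_one_iff_unique]
  constructor
  · constructor
    intro a b
    apply Subtype.ext
    funext k t
    rw [(a.2.1.1 k).2 t (Nat.zero_le t), (b.2.1.1 k).2 t (Nat.zero_le t),
      a.2.1.2.1 k, b.2.1.2.1 k]
  · exact ⟨⟨fun _ _ => 0, ⟨fun k => ⟨fun t ht => absurd ht (by omega), fun t _ => rfl⟩,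
      fun k => rfl, fun j k => rfl, fun t _ j k _ => le_rfl⟩,
      fun t h0 ht => absurd ht (by omega), fun t ht => absurd ht (by omega)⟩⟩

lemma card_friendly_one : Nat.card {y : Fin p → ℕ → ℤ // FriendlyWM p 1 y} = 0 := by
  have : IsEmpty {y : Fin p → ℕ → ℤ // FriendlyWM p 1 y} := by
    constructor
    intro x
    refine x.2.2.2 0 (by omega) ⟨fun j k => ?_, fun j k => ?_⟩
    · rw [x.2.1.2.1 j, x.2.1.2.1 k]
    · exact x.2.1.2.2.1 j k
  simp

lemma card_piece_eq_friendly {m : ℕ} (hm : 2 ≤ m) :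
    Nat.card {y : Fin p → ℕ → ℤ // Piece p m y} =
      Nat.card {y : Fin p → ℕ → ℤ // FriendlyWM p m y} := by
  apply Nat.card_congr
  refine Equiv.subtypeEquivRight fun y => ⟨fun h => ⟨h.1, h.2, fun t ht hc => ?_⟩,
    fun h => ⟨h.1, h.2.1⟩⟩
  rcases Nat.eq_zero_or_pos t with h0 | h0
  · subst h0
    exact h.2 1 (by omega) (by omega) hc.2
  · exact h.2 t h0 ht hc.1

def pieceOneEquiv (hp : 1 ≤ p) :
    {y : Fin p → ℕ → ℤ // Piece p 1 y} ≃ Bool where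
  toFun x := decide (x.1 ⟨0, hp⟩ 1 = 1)
  invFun b := ⟨fun _ t => if t = 0 then 0 else if b then 1 else -1, by
    refine ⟨⟨fun k => ⟨fun t ht => ?_, fun t ht => ?_⟩, fun k => ?_, fun j k => rfl,
      fun t _ j k _ => le_rfl⟩, fun t h0 ht => absurd ht (by omega)⟩
    · have ht0 : t = 0 := by omega
      subst ht0
      cases b
      · right; norm_num
      · left; norm_num
    · have ht1 : t ≠ 0 := by omega
      simp [ht1]
    · rfl⟩
  left_inv x := by
    obtain ⟨y, hy⟩ := x
    apply Subtype.ext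
    funext k t
    dsimp only
    rcases Nat.eq_zero_or_pos t with h0 | h0
    · subst h0; simp [hy.1.2.1 k]
    · have ht1 : t ≠ 0 := by omega
      simp only [ht1, if_false]
      have hfr : y k t = y k 1 := (hy.1.1 k).2 t (by omega)
      have hend : y k 1 = y ⟨0, hp⟩ 1 := hy.1.2.2.1 k ⟨0, hp⟩
      rcases (hy.1.1 ⟨0, hp⟩).1 0 (by omega) with h1 | h1 <;>
        rw [hy.1.2.1 ⟨0, hp⟩] at h1 <;> norm_num at h1
      · have he1 : y ⟨0, hp⟩ 1 = 1 := by omega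
        simp [he1, hfr, hend]
      · have he1 : y ⟨0, hp⟩ 1 = -1 := by omega
        simp [hfr, hend, he1]
  right_inv b := by
    cases b <;> norm_num

lemma card_piece_one (hp : 1 ≤ p) :
    Nat.card {y : Fin p → ℕ → ℤ // Piece p 1 y} = 2 := by
  rw [Nat.card_congr (pieceOneEquiv hp)]
  simp [Nat.card_eq_fintype_card]

end WMAux

theorem friendly_genfun_eq (p : ℕ) (hp : 1 ≤ p) :
    (PowerSeries.mk fun n => (Nat.card {y : Fin p → ℕ → ℤ // FriendlyWM p n y} : ℚ)) =
      2 * (1 - PowerSeries.X) -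
        (PowerSeries.mk fun n => (Nat.card {y : Fin p → ℕ → ℤ // Vicious p n y} : ℚ))⁻¹ := by
  classical
  open WMAux PowerSeries in
  set F : PowerSeries ℚ :=
    PowerSeries.mk (fun n => (Nat.card {y : Fin p → ℕ → ℤ // FriendlyWM p n y} : ℚ)) with hF
  set V : PowerSeries ℚ :=
    PowerSeries.mk (fun n => (Nat.card {y : Fin p → ℕ → ℤ // Vicious p n y} : ℚ)) with hV
  have hvs : ∀ m : ℕ, (Nat.card {y : Fin p → ℕ → ℤ // Vicious p m y} : ℚ) =
      (Nat.card {y : Fin p → ℕ → ℤ // SuperFriendly p m y} : ℚ) := by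
    intro m
    exact_mod_cast congrArg (Nat.cast (R := ℚ)) (Nat.card_congr (viciousEquiv hp m))
  have hS0 : (Nat.card {y : Fin p → ℕ → ℤ // SuperFriendly p 0 y} : ℚ) = 1 := by
    exact_mod_cast (card_sf_zero (p := p))
  have hf0 : (Nat.card {y : Fin p → ℕ → ℤ // FriendlyWM p 0 y} : ℚ) = 1 := by
    exact_mod_cast (card_friendly_zero (p := p))
  have hSrec : ∀ n : ℕ, 1 ≤ n →
      (Nat.card {y : Fin p → ℕ → ℤ // SuperFriendly p n y} : ℚ) =
        ∑ k ∈ Finset.range n, (Nat.card {z : Fin p → ℕ → ℤ // Piece p (k + 1) z} : ℚ) *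
          (Nat.card {w : Fin p → ℕ → ℤ // SuperFriendly p (n - (k + 1)) w} : ℚ) := by
    intro n hn
    have h2 : ((Nat.card {y : Fin p → ℕ → ℤ // SuperFriendly p n y} : ℕ) : ℚ)
        = ((∑ k : Fin n, Nat.card {z : Fin p → ℕ → ℤ // Piece p ((k : ℕ) + 1) z} *
            Nat.card {w : Fin p → ℕ → ℤ // SuperFriendly p (n - ((k : ℕ) + 1)) w} : ℕ) : ℚ) := by
      exact_mod_cast congrArg (Nat.cast (R := ℚ)) (s_card_rec (p := p) n hn)
    push_cast at h2
    rw [h2]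
    exact Fin.sum_univ_eq_sum_range
      (fun k => ((Nat.card {z : Fin p → ℕ → ℤ // Piece p (k + 1) z} : ℚ) *
        (Nat.card {w : Fin p → ℕ → ℤ // SuperFriendly p (n - (k + 1)) w} : ℚ))) n
  have hG : ∀ j : ℕ, (PowerSeries.coeff j) (2 * (1 - PowerSeries.X) - F) =
      (if j = 0 then 2 else if j = 1 then -2 else 0) -
        (Nat.card {y : Fin p → ℕ → ℤ // FriendlyWM p j y} : ℚ) := by
    intro j
    have h2 : (2 * (1 - PowerSeries.X) : PowerSeries ℚ) =
        PowerSeries.C 2 - PowerSeries.C 2 * PowerSeries.X := by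
      rw [show (2 : PowerSeries ℚ) = PowerSeries.C 2 from
        (map_ofNat (PowerSeries.C (R := ℚ)) 2).symm]
      ring
    rw [map_sub, h2, map_sub, PowerSeries.coeff_C, PowerSeries.coeff_C_mul,
      PowerSeries.coeff_X, hF, PowerSeries.coeff_mk]
    rcases j with _ | _ | j <;> norm_num
  have key : (2 * (1 - PowerSeries.X) - F) * V = 1 := by
    ext n
    rw [PowerSeries.coeff_mul, Finset.Nat.sum_antidiagonal_eq_sum_range_succ_mk]
    simp only [hG, hV, PowerSeries.coeff_mk, hvs]
    rcases Nat.eq_zero_or_pos n with hn0 | hn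
    · subst hn0
      simp only [Finset.sum_range_one]
      rw [PowerSeries.coeff_zero_eq_constantCoeff, map_one, hf0, hS0]
      norm_num
    · rw [PowerSeries.coeff_one, if_neg (by omega)]
      rw [Finset.sum_range_succ']
      have hterm : ∀ i : ℕ,
          ((if i + 1 = 0 then (2 : ℚ) else if i + 1 = 1 then -2 else 0) -
            (Nat.card {y : Fin p → ℕ → ℤ // FriendlyWM p (i + 1) y} : ℚ)) =
          -((Nat.card {z : Fin p → ℕ → ℤ // Piece p (i + 1) z} : ℚ)) := by
        intro i
        rcases Nat.eq_zero_or_pos i with h | h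
        · subst h
          have h1 : (Nat.card {y : Fin p → ℕ → ℤ // FriendlyWM p 1 y} : ℚ) = 0 := by
            exact_mod_cast (card_friendly_one (p := p))
          have h2 : (Nat.card {z : Fin p → ℕ → ℤ // Piece p 1 z} : ℚ) = 2 := by
            exact_mod_cast card_piece_one hp
          rw [h1, h2]
          norm_num
        · rw [if_neg (by omega), if_neg (by omega),
            card_piece_eq_friendly (p := p) (m := i + 1) (by omega)]
          ring
      have hsum : ∑ i ∈ Finset.range n,
          ((if i + 1 = 0 then (2 : ℚ) else if i + 1 = 1 then -2 else 0) -
            (Nat.card {y : Fin p → ℕ → ℤ // FriendlyWM p (i + 1) y} : ℚ)) *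
              (Nat.card {w : Fin p → ℕ → ℤ // SuperFriendly p (n - (i + 1)) w} : ℚ) =
          -(∑ i ∈ Finset.range n, (Nat.card {z : Fin p → ℕ → ℤ // Piece p (i + 1) z} : ℚ) *
            (Nat.card {w : Fin p → ℕ → ℤ // SuperFriendly p (n - (i + 1)) w} : ℚ)) := by
        rw [← Finset.sum_neg_distrib]
        refine Finset.sum_congr rfl fun i _ => ?_
        rw [hterm i]
        ring
      rw [hsum, ← hSrec n hn, Nat.sub_zero, hf0]
      norm_num
  have hV0 : PowerSeries.constantCoeff V ≠ 0 := by
    rw [hV]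
    rw [show PowerSeries.constantCoeff (PowerSeries.mk
      (fun n => (Nat.card {y : Fin p → ℕ → ℤ // Vicious p n y} : ℚ))) =
      (Nat.card {y : Fin p → ℕ → ℤ // Vicious p 0 y} : ℚ) from PowerSeries.constantCoeff_mk]
    rw [hvs 0, hS0]
    norm_num
  have hinv := (PowerSeries.eq_inv_iff_mul_eq_one hV0).mpr key
  rw [← hinv]
  ring
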